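/- For every positive integer ℓ, the sum of c(ℓ,k)/(ℓ! · 4^k) over k from 1 to ℓ with k even equals (1/2)(Γ(ℓ+1/4)/(Γ(1/4) ℓ!) − Γ(ℓ−1/4)/(4 Γ(3/4) ℓ!)), and the corresponding sum over odd k equals (1/2)(Γ(ℓ+1/4)/(Γ(1/4) ℓ!) + Γ(ℓ−1/4)/(4 Γ(3/4) ℓ!)). -/

import Mathlib

/-- Number of cycles of a permutation, counting fixed points as cycles of length 1. -/
def numCycles {n : ℕ} (σ : Equiv.Perm (Fin n)) : ℕ :=
  Multiset.card σ.cycleType + (n - σ.cycleType.sum)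

/-- Number of cycles of even length of a permutation. -/
def numEvenCycles {n : ℕ} (σ : Equiv.Perm (Fin n)) : ℕ :=
  Multiset.card (σ.cycleType.filter (fun d => Even d))

/-- The unsigned Stirling number of the first kind: the number of permutations of
`ℓ` letters with exactly `k` cycles. -/
noncomputable def stirlingC (ℓ k : ℕ) : ℕ :=
  Nat.card {σ : Equiv.Perm (Fin ℓ) // numCycles σ = k}


section Aux

open Equiv Equiv.Perm Finset

variable {α : Type*} [Fintype α] [DecidableEq α]

/-- cycle count including fixed points, for a general fintype. -/
def ccAux (σ : Equiv.Perm α) : ℕ :=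
  Multiset.card σ.cycleType + (Fintype.card α - σ.support.card)

lemma ccAux_one : ccAux (1 : Perm α) = Fintype.card α := by
  simp [ccAux]

lemma ccAux_swap_mul (τ : Perm α) (a : α) (h1 : τ a ≠ a) :
    ccAux (Equiv.swap a (τ a) * τ) = ccAux τ + 1 := by
  classical
  have hsle : τ.support.card ≤ Fintype.card α := Finset.card_le_univ _
  by_cases h2 : τ (τ a) = a
  · -- a lies in a 2-cycle
    set b := τ a with hb
    set σ := Equiv.swap a b * τ with hσdef
    have hσa : σ a = a := by
      simp [hσdef, ← hb, Equiv.swap_apply_right]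
    have hσb : σ b = b := by
      simp only [hσdef, Perm.mul_apply]
      rw [hb, h2, Equiv.swap_apply_left]
    have hab : a ≠ b := Ne.symm h1
    have hdisj : Equiv.Perm.Disjoint (Equiv.swap a b) σ := by
      intro x
      by_cases hx : x = a
      · right; rw [hx, hσa]
      by_cases hx' : x = b
      · right; rw [hx', hσb]
      · left; exact Equiv.swap_apply_of_ne_of_ne hx hx'
    have hτ' : τ = Equiv.swap a b * σ := by
      rw [hσdef, ← mul_assoc, Equiv.swap_mul_self, one_mul]
    have hct : τ.cycleType = (Equiv.swap a b).cycleType + σ.cycleType := by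
      conv_lhs => rw [hτ']
      exact hdisj.cycleType_mul
    have hcsw : (Equiv.swap a b).cycleType = {2} := by
      rw [(isCycle_swap hab).cycleType, card_support_swap hab]
    have hcard : Multiset.card τ.cycleType = Multiset.card σ.cycleType + 1 := by
      rw [hct, hcsw]; simp [add_comm]
    have hsupp : τ.support.card = σ.support.card + 2 := by
      conv_lhs => rw [hτ']
      rw [hdisj.card_support_mul, card_support_swap hab]; omega
    show ccAux σ = ccAux τ + 1
    unfold ccAux
    omega
  · -- a lies in a cycle of length ≥ 3
    set c := τ.cycleOf a with hcdef
    have hca : c a = τ a := cycleOf_apply_self τ a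
    have hcca : c (c a) = τ (τ a) := by rw [hca]; exact cycleOf_apply_apply_self τ a
    have hc1 : c a ≠ a := by rw [hca]; exact h1
    have hc2 : c (c a) ≠ a := by rw [hcca]; exact h2
    have hcyc : IsCycle c := isCycle_cycleOf τ h1
    set d := τ * c⁻¹ with hddef
    have hmem : c ∈ τ.cycleFactorsFinset :=
      cycleOf_mem_cycleFactorsFinset_iff.mpr (mem_support.mpr h1)
    have hdisj : Equiv.Perm.Disjoint d c := disjoint_mul_inv_of_mem_cycleFactorsFinset hmem
    have hτdc : τ = d * c := by rw [hddef, inv_mul_cancel_right]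
    set c' := Equiv.swap a (c a) * c with hc'def
    have hcyc' : IsCycle c' := hcyc.swap_mul hc1 hc2
    have hsupp' : c'.support = c.support \ {a} := support_swap_mul_eq c a hc2
    have haInc : a ∈ c.support := mem_support.mpr hc1
    have hcaInc : c a ∈ c.support := by
      rw [mem_support]
      intro h
      exact hc1 (c.injective h)
    have hdsw : Equiv.Perm.Disjoint d (Equiv.swap a (c a)) := by
      intro x
      rcases hdisj x with hx | hx
      · left; exact hx
      · right
        have hxa : x ≠ a := by rintro rfl; exact hc1 hx
        have hxca : x ≠ c a := by
          rintro rfl; exact hc1 (c.injective hx)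
        exact Equiv.swap_apply_of_ne_of_ne hxa hxca
    have hσ : Equiv.swap a (τ a) * τ = d * c' := by
      rw [← hca]
      have hstep : d * c' = Equiv.swap a (c a) * (d * c) := by
        rw [hc'def, ← mul_assoc, ← mul_assoc, hdsw.commute.eq]
      rw [hstep, ← hτdc]
    have hdisj' : Equiv.Perm.Disjoint d c' := by
      rw [disjoint_iff_disjoint_support] at hdisj ⊢
      refine hdisj.mono_right ?_
      rw [hsupp']
      exact Finset.sdiff_subset
    have hsc2 : 2 ≤ c.support.card := hcyc.two_le_card_support
    have hsuppc' : c'.support.card = c.support.card - 1 := by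
      rw [hsupp', Finset.card_sdiff_of_subset (by simpa using haInc)]
      simp
    have hctτ : Multiset.card τ.cycleType = Multiset.card d.cycleType + 1 := by
      conv_lhs => rw [hτdc]
      rw [hdisj.cycleType_mul, hcyc.cycleType]
      simp
    have hctσ : Multiset.card (Equiv.swap a (τ a) * τ).cycleType
        = Multiset.card d.cycleType + 1 := by
      rw [hσ, hdisj'.cycleType_mul, hcyc'.cycleType]
      simp
    have hsτ : τ.support.card = d.support.card + c.support.card := by
      conv_lhs => rw [hτdc]; exact hdisj.card_support_mul
    have hsσ : (Equiv.swap a (τ a) * τ).support.card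
        = d.support.card + (c.support.card - 1) := by
      rw [hσ, hdisj'.card_support_mul, hsuppc']
    unfold ccAux
    omega

lemma decomposeFin_zero_eq_extendDomain {n : ℕ} (e : Perm (Fin n)) :
    Equiv.Perm.decomposeFin.symm (0, e) = e.extendDomain (finSuccAboveEquiv 0) := by
  refine Equiv.ext fun x => ?_
  refine Fin.cases ?_ ?_ x
  · rw [Equiv.Perm.decomposeFin_symm_apply_zero,
      Perm.extendDomain_apply_not_subtype _ _ (by simp)]
  · intro i
    rw [Equiv.Perm.decomposeFin_symm_apply_succ]
    rw [Perm.extendDomain_apply_subtype e (finSuccAboveEquiv 0)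
      (show (fun x : Fin (n+1) => x ≠ 0) i.succ from Fin.succ_ne_zero i)]
    have hsymm : (finSuccAboveEquiv (0 : Fin (n+1))).symm ⟨i.succ, Fin.succ_ne_zero i⟩ = i := by
      rw [Equiv.symm_apply_eq]
      simp [finSuccAboveEquiv_apply, Fin.succAbove_zero]
    rw [hsymm]
    simp [finSuccAboveEquiv_apply, Fin.succAbove_zero]

lemma ccAux_decomposeFin_zero {n : ℕ} (e : Perm (Fin n)) :
    ccAux (Equiv.Perm.decomposeFin.symm (0, e)) = ccAux e + 1 := by
  rw [decomposeFin_zero_eq_extendDomain]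
  have h3 : e.support.card ≤ n := le_trans (Finset.card_le_univ _) (by simp)
  unfold ccAux
  rw [Equiv.Perm.cycleType_extendDomain, Equiv.Perm.card_support_extend_domain]
  simp only [Fintype.card_fin]
  omega

lemma decomposeFin_symm_eq {n : ℕ} (p : Fin (n+1)) (e : Perm (Fin n)) :
    Equiv.Perm.decomposeFin.symm (p, e)
      = Equiv.swap 0 p * Equiv.Perm.decomposeFin.symm (0, e) := by
  ext x
  refine Fin.cases ?_ ?_ x
  · simp
  · intro i; simp

lemma ccAux_decomposeFin {n : ℕ} (p : Fin (n+1)) (e : Perm (Fin n)) (hp : p ≠ 0) :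
    ccAux (Equiv.Perm.decomposeFin.symm (p, e)) = ccAux e := by
  set τ := Equiv.Perm.decomposeFin.symm (p, e) with hτ
  have hτ0 : τ 0 = p := Equiv.Perm.decomposeFin_symm_apply_zero p e
  have h1 : τ 0 ≠ 0 := by rw [hτ0]; exact hp
  have hR := ccAux_swap_mul τ 0 h1
  have hsw : Equiv.swap 0 (τ 0) * τ = Equiv.Perm.decomposeFin.symm (0, e) := by
    rw [hτ0, hτ, decomposeFin_symm_eq p e, ← mul_assoc, Equiv.swap_mul_self, one_mul]
  rw [hsw, ccAux_decomposeFin_zero] at hR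
  omega

lemma sum_pow_ccAux (n : ℕ) (x : ℝ) :
    ∑ σ : Perm (Fin n), x ^ ccAux σ = ∏ i ∈ Finset.range n, (x + i) := by
  induction n with
  | zero =>
    have huniq : ∀ σ : Perm (Fin 0), σ = 1 := fun σ => Equiv.ext fun i => i.elim0
    rw [Finset.prod_range_zero]
    calc ∑ σ : Perm (Fin 0), x ^ ccAux σ
        = ∑ _σ : Perm (Fin 0), x ^ ccAux (1 : Perm (Fin 0)) :=
          Finset.sum_congr rfl fun σ _ => by rw [huniq σ]
      _ = 1 := by
          rw [Finset.sum_const, ccAux_one]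
          simp [Fintype.card_perm]
  | succ n ih =>
    rw [← Equiv.sum_comp Equiv.Perm.decomposeFin.symm (fun σ => x ^ ccAux σ),
      Fintype.sum_prod_type, Fin.sum_univ_succ]
    have hS0 : ∑ e : Perm (Fin n), x ^ ccAux (Equiv.Perm.decomposeFin.symm ((0 : Fin (n+1)), e))
        = x * ∑ e : Perm (Fin n), x ^ ccAux e := by
      rw [Finset.mul_sum]
      refine Finset.sum_congr rfl fun e _ => ?_
      rw [ccAux_decomposeFin_zero, pow_succ, mul_comm]
    have hSi : ∀ i : Fin n,
        ∑ e : Perm (Fin n), x ^ ccAux (Equiv.Perm.decomposeFin.symm (i.succ, e))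
          = ∑ e : Perm (Fin n), x ^ ccAux e := fun i =>
      Finset.sum_congr rfl fun e _ => by rw [ccAux_decomposeFin _ _ (Fin.succ_ne_zero i)]
    rw [hS0, Finset.sum_congr rfl (fun i _ => hSi i), Finset.sum_const, ih,
      Finset.prod_range_succ]
    simp only [Finset.card_univ, Fintype.card_fin, nsmul_eq_mul]
    ring

lemma numCycles_eq_ccAux {n : ℕ} (σ : Perm (Fin n)) : numCycles σ = ccAux σ := by
  unfold numCycles ccAux
  rw [Equiv.Perm.sum_cycleType, Fintype.card_fin]

lemma numCycles_mem {ℓ : ℕ} (hℓ : 0 < ℓ) (σ : Perm (Fin ℓ)) :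
    numCycles σ ∈ Finset.Icc 1 ℓ := by
  have hsum := Equiv.Perm.sum_cycleType σ
  have hle : σ.support.card ≤ ℓ := le_trans (Finset.card_le_univ _) (by simp)
  have hcard : Multiset.card σ.cycleType • 1 ≤ σ.cycleType.sum :=
    Multiset.card_nsmul_le_sum fun x hx =>
      Nat.one_le_of_lt (Equiv.Perm.two_le_of_mem_cycleType hx)
  simp only [smul_eq_mul, mul_one] at hcard
  rw [Finset.mem_Icc]
  unfold numCycles
  by_cases h0 : σ.cycleType = 0
  · rw [h0]; simp; omega
  · have hpos : 0 < Multiset.card σ.cycleType := Multiset.card_pos.mpr h0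
    omega

lemma stirlingC_eq_card {ℓ k : ℕ} :
    stirlingC ℓ k = (Finset.univ.filter (fun σ : Perm (Fin ℓ) => numCycles σ = k)).card := by
  rw [stirlingC, Nat.card_eq_fintype_card, Fintype.card_subtype]

lemma sum_stirlingC_mul (ℓ : ℕ) (hℓ : 0 < ℓ) (y : ℝ) :
    ∑ k ∈ Finset.Icc 1 ℓ, (stirlingC ℓ k : ℝ) * y ^ k
      = ∏ i ∈ Finset.range ℓ, (y + i) := by
  rw [← sum_pow_ccAux, ← Finset.sum_fiberwise_of_maps_to
    (fun σ _ => numCycles_mem hℓ σ) (fun σ => y ^ ccAux σ)]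
  refine Finset.sum_congr rfl fun k _ => ?_
  rw [stirlingC_eq_card]
  have hcongr : ∀ σ ∈ Finset.univ.filter (fun σ : Perm (Fin ℓ) => numCycles σ = k),
      y ^ ccAux σ = y ^ k := by
    intro σ hσ
    rw [Finset.mem_filter] at hσ
    rw [← numCycles_eq_ccAux, hσ.2]
  rw [Finset.sum_congr rfl hcongr, Finset.sum_const, nsmul_eq_mul]

lemma gamma_prod (x : ℝ) (hx : 0 < x) (n : ℕ) :
    Real.Gamma (x + n) = (∏ i ∈ Finset.range n, (x + i)) * Real.Gamma x := by
  induction n with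
  | zero => simp
  | succ n ih =>
    have hxn : x + n ≠ 0 := by positivity
    have hcast : (x : ℝ) + (n + 1 : ℕ) = (x + n) + 1 := by push_cast; ring
    rw [hcast, Real.Gamma_add_one hxn, ih, Finset.prod_range_succ]
    ring

theorem stmt_18 (ℓ : ℕ) (hℓ : 0 < ℓ) :
    ∑ k ∈ (Finset.Icc 1 ℓ).filter (fun k => Even k),
        (stirlingC ℓ k : ℝ) / (Nat.factorial ℓ * 4 ^ k)
      = (1 / 2) * (Real.Gamma ((ℓ : ℝ) + 1 / 4) / (Real.Gamma (1 / 4) * Nat.factorial ℓ)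
          - Real.Gamma ((ℓ : ℝ) - 1 / 4) / (4 * Real.Gamma (3 / 4) * Nat.factorial ℓ)) ∧
    ∑ k ∈ (Finset.Icc 1 ℓ).filter (fun k => Odd k),
        (stirlingC ℓ k : ℝ) / (Nat.factorial ℓ * 4 ^ k)
      = (1 / 2) * (Real.Gamma ((ℓ : ℝ) + 1 / 4) / (Real.Gamma (1 / 4) * Nat.factorial ℓ)
          + Real.Gamma ((ℓ : ℝ) - 1 / 4) / (4 * Real.Gamma (3 / 4) * Nat.factorial ℓ)) := by
  have hfac : (Nat.factorial ℓ : ℝ) ≠ 0 := Nat.cast_ne_zero.mpr (Nat.factorial_ne_zero ℓ)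
  have hG14 : Real.Gamma (1/4) ≠ 0 := (Real.Gamma_pos_of_pos (by norm_num)).ne'
  have hG34 : Real.Gamma (3/4) ≠ 0 := (Real.Gamma_pos_of_pos (by norm_num)).ne'
  -- evaluation at 1/4
  have hplus : ∏ i ∈ Finset.range ℓ, ((1/4 : ℝ) + i)
      = Real.Gamma ((ℓ : ℝ) + 1/4) / Real.Gamma (1/4) := by
    have h := gamma_prod (1/4) (by norm_num) ℓ
    rw [show (1/4 : ℝ) + ℓ = (ℓ : ℝ) + 1/4 by ring] at h
    rw [h]
    field_simp
  -- evaluation at -1/4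
  have hminus : ∏ i ∈ Finset.range ℓ, (-(1/4 : ℝ) + i)
      = -(Real.Gamma ((ℓ:ℝ) - 1/4) / (4 * Real.Gamma (3/4))) := by
    obtain ⟨m, rfl⟩ : ∃ m, ℓ = m + 1 := ⟨ℓ - 1, by omega⟩
    rw [Finset.prod_range_succ']
    have h34 := gamma_prod (3/4) (by norm_num) m
    have hc : ∀ i ∈ Finset.range m, (-(1/4:ℝ) + ((i : ℕ) + 1 : ℕ)) = (3/4 + i) := by
      intro i _; push_cast; ring
    rw [Finset.prod_congr rfl hc]
    have hG : (∏ i ∈ Finset.range m, ((3/4 : ℝ) + i))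
        = Real.Gamma ((3:ℝ)/4 + m) / Real.Gamma (3/4) := by
      rw [h34]; field_simp
    rw [hG]
    rw [show ((3:ℝ)/4 + m) = ((m+1 : ℕ) : ℝ) - 1/4 by push_cast; ring]
    push_cast
    ring
  have key1 := sum_stirlingC_mul ℓ hℓ (1/4)
  have key2 := sum_stirlingC_mul ℓ hℓ (-(1/4))
  set T := Finset.Icc 1 ℓ with hT
  set U := ∑ k ∈ T.filter (fun k => Even k), (stirlingC ℓ k : ℝ) * (1/4)^k with hU
  set V := ∑ k ∈ T.filter (fun k => Odd k), (stirlingC ℓ k : ℝ) * (1/4)^k with hV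
  have hfilterodd : T.filter (fun k => Odd k) = T.filter (fun k => ¬ Even k) := by
    exact Finset.filter_congr fun k _ => by
      simpa using Iff.symm Nat.not_even_iff_odd
  have hUV : U + V = ∑ k ∈ T, (stirlingC ℓ k : ℝ) * (1/4)^k := by
    rw [hU, hV, hfilterodd]
    exact Finset.sum_filter_add_sum_filter_not T _ _
  have hUV2 : U - V = ∑ k ∈ T, (stirlingC ℓ k : ℝ) * (-(1/4))^k := by
    rw [← Finset.sum_filter_add_sum_filter_not T (fun k => Even k)
      (fun k => (stirlingC ℓ k : ℝ) * (-(1/4))^k)]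
    have he : ∀ k ∈ T.filter (fun k => Even k),
        (stirlingC ℓ k : ℝ) * (-(1/4))^k = (stirlingC ℓ k : ℝ) * (1/4)^k := by
      intro k hk
      rw [Finset.mem_filter] at hk
      rw [hk.2.neg_pow]
    have ho : ∀ k ∈ T.filter (fun k => ¬ Even k),
        (stirlingC ℓ k : ℝ) * (-(1/4))^k = -((stirlingC ℓ k : ℝ) * (1/4)^k) := by
      intro k hk
      rw [Finset.mem_filter] at hk
      rw [(Nat.not_even_iff_odd.mp hk.2).neg_pow]
      ring
    rw [Finset.sum_congr rfl he, Finset.sum_congr rfl ho, Finset.sum_neg_distrib]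
    rw [hU, hV, hfilterodd]
    ring
  rw [key1, hplus] at hUV
  rw [key2, hminus] at hUV2
  -- rewrite the goal sums in terms of U and V
  have hA : ∑ k ∈ T.filter (fun k => Even k),
      (stirlingC ℓ k : ℝ) / (Nat.factorial ℓ * 4 ^ k) = U / Nat.factorial ℓ := by
    rw [hU, Finset.sum_div]
    refine Finset.sum_congr rfl fun k _ => ?_
    rw [div_pow, one_pow, mul_one_div, div_div, mul_comm ((Nat.factorial ℓ : ℝ)) ((4:ℝ)^k)]
  have hB : ∑ k ∈ T.filter (fun k => Odd k),
      (stirlingC ℓ k : ℝ) / (Nat.factorial ℓ * 4 ^ k) = V / Nat.factorial ℓ := by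
    rw [hV, Finset.sum_div]
    refine Finset.sum_congr rfl fun k _ => ?_
    rw [div_pow, one_pow, mul_one_div, div_div, mul_comm ((Nat.factorial ℓ : ℝ)) ((4:ℝ)^k)]
  constructor
  · rw [hA]
    have hUval : U = (Real.Gamma ((ℓ : ℝ) + 1/4) / Real.Gamma (1/4)
        - Real.Gamma ((ℓ:ℝ) - 1/4) / (4 * Real.Gamma (3/4))) / 2 := by linarith
    rw [hUval]
    field_simp
  · rw [hB]
    have hVval : V = (Real.Gamma ((ℓ : ℝ) + 1/4) / Real.Gamma (1/4)
        + Real.Gamma ((ℓ:ℝ) - 1/4) / (4 * Real.Gamma (3/4))) / 2 := by linarith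
    rw [hVval]
    field_simp
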